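/- If A and B are microCCS processes in normal form with respect to the distribution-law rewriting, then A ∼ B implies A ≡ B. Moreover, every prefixed process in normal form is prime. -/

import Mathlib

/-- CCS visible actions: a name `a` or a coname `ā`. -/
inductive Act where
  | inp : ℕ → Act
  | out : ℕ → Act
deriving DecidableEq

/-- The coaction. -/
def Act.co : Act → Act
  | .inp a => .out a
  | .out a => .inp a

/-- MicroCCS processes: nil, prefix, parallel composition. -/
inductive Proc where
  | nil : Proc
  | pre : Act → Proc → Proc
  | par : Proc → Proc → Proc
deriving DecidableEq

/-- Transition labels: a visible action or τ. -/
inductive Lab where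
  | act : Act → Lab
  | tau : Lab
deriving DecidableEq

/-- The standard CCS labelled transition system on microCCS. -/
inductive Step : Proc → Lab → Proc → Prop where
  | pre (η : Act) (P : Proc) : Step (.pre η P) (.act η) P
  | syn {P P' Q Q' : Proc} {η : Act} :
      Step P (.act η) P' → Step Q (.act η.co) Q' →
      Step (.par P Q) .tau (.par P' Q')
  | parL {P P' : Proc} {μ : Lab} (Q : Proc) :
      Step P μ P' → Step (.par P Q) μ (.par P' Q)
  | parR {Q Q' : Proc} {μ : Lab} (P : Proc) :
      Step Q μ Q' → Step (.par P Q) μ (.par P Q')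

/-- A (symmetric) bisimulation. -/
def IsBisim (R : Proc → Proc → Prop) : Prop :=
  (∀ P Q, R P Q → R Q P) ∧
  ∀ P Q μ P', R P Q → Step P μ P' → ∃ Q', Step Q μ Q' ∧ R P' Q'

/-- Strong bisimilarity: the union of all bisimulations. -/
def Bisim (P Q : Proc) : Prop := ∃ R, IsBisim R ∧ R P Q

/-- The size of a process: its number of prefixes. -/
def Proc.size : Proc → ℕ
  | .nil => 0
  | .pre _ P => 1 + P.size
  | .par P Q => P.size + Q.size

/-- Structural congruence: abelian monoid laws for parallel composition. -/
inductive SC : Proc → Proc → Prop where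
  | refl (P) : SC P P
  | symm : SC P Q → SC Q P
  | trans : SC P Q → SC Q R → SC P R
  | comm (P Q) : SC (.par P Q) (.par Q P)
  | assoc (P Q R) : SC (.par P (.par Q R)) (.par (.par P Q) R)
  | unit (P) : SC (.par P .nil) P
  | pre (η) : SC P Q → SC (.pre η P) (.pre η Q)
  | par : SC P P' → SC Q Q' → SC (.par P Q) (.par P' Q')

/-- `pow P k` is the k-fold parallel composition of `P`. -/
def pow (P : Proc) : ℕ → Proc
  | 0 => .nil
  | n+1 => .par P (pow P n)

/-- One step of rewriting with the distribution law
    `η.(P ‖ (η.P)^k) ⇝ (η.P)^{k+1}` (k ≥ 1), modulo structural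
    congruence, in any context. -/
inductive RW : Proc → Proc → Prop where
  | head {η : Act} {P : Proc} {k : ℕ} (hk : 1 ≤ k) :
      RW (.pre η (.par P (pow (.pre η P) k))) (pow (.pre η P) (k+1))
  | pre (η) : RW P P' → RW (.pre η P) (.pre η P')
  | parL (Q) : RW P P' → RW (.par P Q) (.par P' Q)
  | parR (P) : RW Q Q' → RW (.par P Q) (.par P Q')
  | congr : SC P P₁ → RW P₁ P₂ → SC P₂ P' → RW P P'

/-- Reflexive-transitive closure of the distribution rewriting. -/
def Rws : Proc → Proc → Prop := Relation.ReflTransGen RW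

/-- Normal forms for the distribution rewriting. -/
def NF (P : Proc) : Prop := ¬ ∃ P', RW P P'

/-- Prime processes. -/
def IsPrime (P : Proc) : Prop :=
  ¬ Bisim P .nil ∧ ∀ Q R, Bisim P (.par Q R) → Bisim Q .nil ∨ Bisim R .nil

section Basic

theorem nil_no_step {μ X} (h : Step .nil μ X) : False := by cases h

theorem step_pre_inv {η P μ X} (h : Step (.pre η P) μ X) : μ = .act η ∧ X = P := by
  cases h; exact ⟨rfl, rfl⟩

@[simp] theorem co_co (a : Act) : a.co.co = a := by cases a <;> rfl

theorem co_ne (a : Act) : a.co ≠ a := by cases a <;> simp [Act.co]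

theorem bisim_symm {P Q} (h : Bisim P Q) : Bisim Q P := by
  obtain ⟨R, hR, h⟩ := h
  exact ⟨R, hR, hR.1 _ _ h⟩

theorem bisim_step {P Q μ P'} (h : Bisim P Q) (hs : Step P μ P') :
    ∃ Q', Step Q μ Q' ∧ Bisim P' Q' := by
  obtain ⟨R, hR, h⟩ := h
  obtain ⟨Q', hQ', hR'⟩ := hR.2 _ _ _ _ h hs
  exact ⟨Q', hQ', R, hR, hR'⟩

theorem isBisim_bisim : IsBisim Bisim :=
  ⟨fun _ _ => bisim_symm, fun _ _ _ _ h hs => bisim_step h hs⟩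

theorem bisim_refl (P : Proc) : Bisim P P :=
  ⟨Eq, ⟨fun _ _ h => h.symm, fun P Q μ P' h hs => ⟨P', h ▸ hs, rfl⟩⟩, rfl⟩

theorem bisim_trans {P Q R} (h1 : Bisim P Q) (h2 : Bisim Q R) : Bisim P R := by
  refine ⟨Relation.Comp Bisim Bisim, ⟨?_, ?_⟩, Q, h1, h2⟩
  · rintro X Y ⟨M, hm1, hm2⟩
    exact ⟨M, bisim_symm hm2, bisim_symm hm1⟩
  · rintro X Y μ X' ⟨M, hm1, hm2⟩ hs
    obtain ⟨M', hsM, hbM⟩ := bisim_step hm1 hs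
    obtain ⟨Y', hsY, hbY⟩ := bisim_step hm2 hsM
    exact ⟨Y', hsY, M', hbM, hbY⟩

theorem bisim_par_congr {P P' Q Q'} (h1 : Bisim P P') (h2 : Bisim Q Q') :
    Bisim (.par P Q) (.par P' Q') := by
  refine ⟨fun X Y => ∃ A A' B B', X = .par A B ∧ Y = .par A' B' ∧ Bisim A A' ∧ Bisim B B',
    ⟨?_, ?_⟩, P, P', Q, Q', rfl, rfl, h1, h2⟩
  · rintro X Y ⟨A, A', B, B', rfl, rfl, hA, hB⟩
    exact ⟨A', A, B', B, rfl, rfl, bisim_symm hA, bisim_symm hB⟩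
  · rintro X Y μ X' ⟨A, A', B, B', rfl, rfl, hA, hB⟩ hs
    cases hs with
    | parL _ hsA =>
      obtain ⟨A₂, hs2, hb2⟩ := bisim_step hA hsA
      exact ⟨_, .parL _ hs2, _, _, _, _, rfl, rfl, hb2, hB⟩
    | parR _ hsB =>
      obtain ⟨B₂, hs2, hb2⟩ := bisim_step hB hsB
      exact ⟨_, .parR _ hs2, _, _, _, _, rfl, rfl, hA, hb2⟩
    | syn hsA hsB =>
      obtain ⟨A₂, hs2, hb2⟩ := bisim_step hA hsA
      obtain ⟨B₂, hs3, hb3⟩ := bisim_step hB hsB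
      exact ⟨_, .syn hs2 hs3, _, _, _, _, rfl, rfl, hb2, hb3⟩

theorem bisim_pre_congr {P Q} (η : Act) (h : Bisim P Q) :
    Bisim (.pre η P) (.pre η Q) := by
  refine ⟨fun X Y => Bisim X Y ∨ ∃ a A B, X = .pre a A ∧ Y = .pre a B ∧ Bisim A B,
    ⟨?_, ?_⟩, .inr ⟨η, P, Q, rfl, rfl, h⟩⟩
  · rintro X Y (h | ⟨a, A, B, rfl, rfl, hb⟩)
    · exact .inl (bisim_symm h)
    · exact .inr ⟨a, B, A, rfl, rfl, bisim_symm hb⟩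
  · rintro X Y μ X' (hb | ⟨a, A, B, rfl, rfl, hb⟩) hs
    · obtain ⟨Y', h1, h2⟩ := bisim_step hb hs
      exact ⟨Y', h1, .inl h2⟩
    · obtain ⟨rfl, rfl⟩ := step_pre_inv hs
      exact ⟨B, .pre a B, .inl hb⟩

end Basic
section SCStep

theorem sc_step_pair : ∀ {P Q}, SC P Q →
    (∀ μ X, Step P μ X → ∃ Y, Step Q μ Y ∧ SC X Y) ∧
    (∀ μ Y, Step Q μ Y → ∃ X, Step P μ X ∧ SC X Y) := by
  intro P Q h
  induction h with
  | refl P => exact ⟨fun μ X h => ⟨X, h, .refl _⟩, fun μ Y h => ⟨Y, h, .refl _⟩⟩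
  | symm h IH =>
    refine ⟨fun μ X hs => ?_, fun μ X hs => ?_⟩
    · obtain ⟨Y, h1, h2⟩ := IH.2 μ X hs; exact ⟨Y, h1, h2.symm⟩
    · obtain ⟨Y, h1, h2⟩ := IH.1 μ X hs; exact ⟨Y, h1, h2.symm⟩
  | trans h1 h2 IH1 IH2 =>
    refine ⟨fun μ X hs => ?_, fun μ X hs => ?_⟩
    · obtain ⟨Y, hY, hXY⟩ := IH1.1 μ X hs
      obtain ⟨Z, hZ, hYZ⟩ := IH2.1 μ Y hY
      exact ⟨Z, hZ, hXY.trans hYZ⟩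
    · obtain ⟨Y, hY, hXY⟩ := IH2.2 μ X hs
      obtain ⟨Z, hZ, hYZ⟩ := IH1.2 μ Y hY
      exact ⟨Z, hZ, hYZ.trans hXY⟩
  | comm P Q =>
    have key : ∀ A B μ X, Step (Proc.par A B) μ X →
        ∃ Y, Step (.par B A) μ Y ∧ SC X Y := by
      intro A B μ X hs
      cases hs with
      | parL _ h => exact ⟨_, .parR _ h, .comm _ _⟩
      | parR _ h => exact ⟨_, .parL _ h, .comm _ _⟩
      | syn h1 h2 => exact ⟨_, .syn h2 (by simpa using h1), .comm _ _⟩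
    refine ⟨key P Q, fun μ X hs => ?_⟩
    obtain ⟨Y, h1, h2⟩ := key Q P μ X hs
    exact ⟨Y, h1, h2.symm⟩
  | assoc P Q R =>
    constructor
    · intro μ X hs
      cases hs with
      | parL _ h => exact ⟨_, .parL _ (.parL _ h), .assoc _ _ _⟩
      | parR _ h =>
        cases h with
        | parL _ hq => exact ⟨_, .parL _ (.parR _ hq), .assoc _ _ _⟩
        | parR _ hr => exact ⟨_, .parR _ hr, .assoc _ _ _⟩
        | syn hq hr => exact ⟨_, .syn (.parR _ hq) hr, .assoc _ _ _⟩
      | syn h1 h2 =>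
        cases h2 with
        | parL _ hq => exact ⟨_, .parL _ (.syn h1 hq), .assoc _ _ _⟩
        | parR _ hr => exact ⟨_, .syn (.parL _ h1) hr, .assoc _ _ _⟩
    · intro μ Y hs
      cases hs with
      | parL _ h =>
        cases h with
        | parL _ hp => exact ⟨_, .parL _ hp, .assoc _ _ _⟩
        | parR _ hq => exact ⟨_, .parR _ (.parL _ hq), .assoc _ _ _⟩
        | syn hp hq => exact ⟨_, .syn hp (.parL _ hq), .assoc _ _ _⟩
      | parR _ h => exact ⟨_, .parR _ (.parR _ h), .assoc _ _ _⟩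
      | syn h1 h2 =>
        cases h1 with
        | parL _ hp => exact ⟨_, .syn hp (.parR _ h2), .assoc _ _ _⟩
        | parR _ hq => exact ⟨_, .parR _ (.syn hq h2), .assoc _ _ _⟩
  | unit P =>
    constructor
    · intro μ X hs
      cases hs with
      | parL _ h => exact ⟨_, h, .unit _⟩
      | parR _ h => exact absurd h (fun h => nil_no_step h)
      | syn h1 h2 => exact absurd h2 (fun h => nil_no_step h)
    · intro μ Y hs
      exact ⟨.par Y .nil, .parL _ hs, .unit _⟩
  | pre η h IH =>
    rename_i P₀ Q₀
    constructor
    · intro μ X hs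
      obtain ⟨rfl, rfl⟩ := step_pre_inv hs
      exact ⟨Q₀, .pre η Q₀, h⟩
    · intro μ Y hs
      obtain ⟨rfl, rfl⟩ := step_pre_inv hs
      exact ⟨P₀, .pre η P₀, h⟩
  | par h1 h2 IH1 IH2 =>
    constructor
    · intro μ X hs
      cases hs with
      | parL _ h =>
        obtain ⟨Y, hY, hXY⟩ := IH1.1 _ _ h
        exact ⟨_, .parL _ hY, .par hXY h2⟩
      | parR _ h =>
        obtain ⟨Y, hY, hXY⟩ := IH2.1 _ _ h
        exact ⟨_, .parR _ hY, .par h1 hXY⟩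
      | syn ha hb =>
        obtain ⟨Y1, hY1, hXY1⟩ := IH1.1 _ _ ha
        obtain ⟨Y2, hY2, hXY2⟩ := IH2.1 _ _ hb
        exact ⟨_, .syn hY1 hY2, .par hXY1 hXY2⟩
    · intro μ Y hs
      cases hs with
      | parL _ h =>
        obtain ⟨X, hX, hXY⟩ := IH1.2 _ _ h
        exact ⟨_, .parL _ hX, .par hXY h2⟩
      | parR _ h =>
        obtain ⟨X, hX, hXY⟩ := IH2.2 _ _ h
        exact ⟨_, .parR _ hX, .par h1 hXY⟩
      | syn ha hb =>
        obtain ⟨X1, hX1, hXY1⟩ := IH1.2 _ _ ha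
        obtain ⟨X2, hX2, hXY2⟩ := IH2.2 _ _ hb
        exact ⟨_, .syn hX1 hX2, .par hXY1 hXY2⟩

theorem sc_step {P Q μ X} (h : SC P Q) (hs : Step P μ X) :
    ∃ Y, Step Q μ Y ∧ SC X Y := (sc_step_pair h).1 μ X hs

theorem sc_bisim {P Q} (h : SC P Q) : Bisim P Q := by
  refine ⟨SC, ⟨fun _ _ h => h.symm, ?_⟩, h⟩
  intro P Q μ P' h hs
  exact sc_step h hs

end SCStep
section Size

theorem step_act_size : ∀ {P a P'}, Step P (.act a) P' → P.size = P'.size + 1 := by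
  intro P a P' h
  generalize hμ : Lab.act a = μ at h
  induction h generalizing a with
  | pre => cases hμ; simp [Proc.size, Nat.add_comm]
  | syn h1 h2 IH1 IH2 => exact absurd hμ (by simp)
  | parL Q h IH => have := IH hμ; simp [Proc.size]; omega
  | parR P h IH => have := IH hμ; simp [Proc.size]; omega

theorem step_size_pos : ∀ {P μ P'}, Step P μ P' → 0 < P.size := by
  intro P μ P' h
  induction h with
  | pre => simp [Proc.size]
  | syn h1 h2 IH1 IH2 => simp [Proc.size]; omega
  | parL Q h IH => simp [Proc.size]; omega
  | parR P h IH => simp [Proc.size]; omega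

theorem exists_act_step : ∀ {P : Proc}, 0 < P.size → ∃ a P', Step P (.act a) P' := by
  intro P
  induction P with
  | nil => intro h; simp [Proc.size] at h
  | pre a P IH => intro _; exact ⟨a, P, .pre a P⟩
  | par P Q IH1 IH2 =>
    intro h
    simp [Proc.size] at h
    rcases (Nat.eq_zero_or_pos P.size).symm with hp | hp
    · obtain ⟨a, P', hs⟩ := IH1 hp
      exact ⟨a, _, .parL _ hs⟩
    · obtain ⟨a, Q', hs⟩ := IH2 (by omega)
      exact ⟨a, _, .parR _ hs⟩

theorem bisim_size : ∀ {P Q}, Bisim P Q → P.size = Q.size := by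
  have key : ∀ n P Q, P.size ≤ n → Bisim P Q → P.size = Q.size := by
    intro n
    induction n with
    | zero =>
      intro P Q hP hb
      by_contra hne
      have hQ : 0 < Q.size := by omega
      obtain ⟨a, Q', hs⟩ := exists_act_step hQ
      obtain ⟨P', hsP, _⟩ := bisim_step (bisim_symm hb) hs
      have := step_size_pos hsP
      omega
    | succ n IH =>
      intro P Q hP hb
      rcases (Nat.eq_zero_or_pos P.size).symm with hp | hp
      · obtain ⟨a, P', hs⟩ := exists_act_step hp
        obtain ⟨Q', hsQ, hb'⟩ := bisim_step hb hs
        have h1 := step_act_size hs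
        have h2 := step_act_size hsQ
        have := IH P' Q' (by omega) hb'
        omega
      · by_contra hne
        have hQ : 0 < Q.size := by omega
        obtain ⟨a, Q', hs⟩ := exists_act_step hQ
        obtain ⟨P', hsP, _⟩ := bisim_step (bisim_symm hb) hs
        have := step_size_pos hsP
        omega
  intro P Q hb
  exact key P.size P Q le_rfl hb

theorem size_zero_sc_nil : ∀ {P : Proc}, P.size = 0 → SC P .nil := by
  intro P
  induction P with
  | nil => intro _; exact .refl _
  | pre a P IH => intro h; simp [Proc.size] at h
  | par P Q IH1 IH2 =>
    intro h
    simp [Proc.size] at h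
    exact .trans (.par (IH1 h.1) (IH2 h.2)) (.unit _)

theorem bisim_nil_of_size {P : Proc} (h : P.size = 0) : Bisim P .nil :=
  sc_bisim (size_zero_sc_nil h)

theorem size_of_bisim_nil {P : Proc} (h : Bisim P .nil) : P.size = 0 := by
  have := bisim_size h
  simpa [Proc.size] using this

theorem bisim_pre_inv {a b : Act} {C D : Proc} (h : Bisim (.pre a C) (.pre b D)) :
    a = b ∧ Bisim C D := by
  obtain ⟨Q', hs, hb⟩ := bisim_step h (.pre a C)
  obtain ⟨h1, rfl⟩ := step_pre_inv hs
  cases h1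
  exact ⟨rfl, hb⟩

end Size
section Comps

theorem sc_size {P Q : Proc} (h : SC P Q) : P.size = Q.size := by
  induction h with
  | refl => rfl
  | symm _ IH => omega
  | trans _ _ IH1 IH2 => omega
  | comm P Q => simp [Proc.size]; omega
  | assoc P Q R => simp [Proc.size]; omega
  | unit P => simp [Proc.size]
  | pre η h IH => simp [Proc.size]; omega
  | par _ _ IH1 IH2 => simp [Proc.size]; omega

def comps : Proc → List Proc
  | .nil => []
  | .pre a P => [.pre a P]
  | .par P Q => comps P ++ comps Q

def listPar : List Proc → Proc
  | [] => .nil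
  | p :: l => .par p (listPar l)

instance scSetoid : Setoid Proc := ⟨SC, ⟨SC.refl, fun h => h.symm, fun h1 h2 => h1.trans h2⟩⟩

abbrev PQ := Quotient scSetoid

def qmk : Proc → PQ := Quotient.mk scSetoid

def cm (P : Proc) : Multiset PQ := ((comps P).map qmk : List PQ)

def qsize : PQ → ℕ := Quotient.lift Proc.size (fun _ _ h => sc_size h)

@[simp] theorem qsize_mk (P : Proc) : qsize (qmk P) = P.size := rfl

theorem qmk_eq_of_sc {P Q : Proc} (h : SC P Q) : qmk P = qmk Q := Quotient.sound h

theorem sc_of_qmk_eq {P Q : Proc} (h : qmk P = qmk Q) : SC P Q := Quotient.exact h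

theorem sc_nil_par (X : Proc) : SC (.par .nil X) X := (SC.comm _ _).trans (SC.unit _)

theorem sc_listPar_append : ∀ (l₁ l₂ : List Proc),
    SC (listPar (l₁ ++ l₂)) (.par (listPar l₁) (listPar l₂)) := by
  intro l₁ l₂
  induction l₁ with
  | nil => exact (sc_nil_par _).symm
  | cons a l IH => exact (SC.par (.refl a) IH).trans (SC.assoc _ _ _)

theorem sc_comps : ∀ (P : Proc), SC P (listPar (comps P)) := by
  intro P
  induction P with
  | nil => exact .refl _
  | pre a P IH => exact (SC.unit _).symm
  | par P Q IH1 IH2 => exact (SC.par IH1 IH2).trans (sc_listPar_append _ _).symm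

theorem sc_listPar_perm {l₁ l₂ : List Proc} (h : l₁.Perm l₂) :
    SC (listPar l₁) (listPar l₂) := by
  induction h with
  | nil => exact .refl _
  | cons x _ IH => exact .par (.refl _) IH
  | swap x y l =>
    exact (SC.assoc _ _ _).trans ((SC.par (SC.comm _ _) (SC.refl _)).trans (SC.assoc _ _ _).symm)
  | trans _ _ IH1 IH2 => exact IH1.trans IH2

theorem sc_of_map_perm : ∀ (l₁ l₂ : List Proc),
    (l₁.map qmk).Perm (l₂.map qmk) → SC (listPar l₁) (listPar l₂) := by
  intro l₁
  induction l₁ with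
  | nil =>
    intro l₂ h
    have h2 : l₂.map qmk = [] := h.symm.eq_nil
    have : l₂ = [] := List.map_eq_nil_iff.mp h2
    subst this; exact .refl _
  | cons a l IH =>
    intro l₂ h
    have hmem : qmk a ∈ l₂.map qmk := h.subset List.mem_cons_self
    obtain ⟨b, hb, hbeq⟩ := List.mem_map.mp hmem
    have hab : SC a b := (sc_of_qmk_eq hbeq).symm
    have hperm : l₂.Perm (b :: l₂.erase b) := List.perm_cons_erase hb
    have h2 : (a :: l).map qmk |>.Perm (qmk b :: (l₂.erase b).map qmk) := by
      simpa using h.trans (hperm.map qmk)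
    have h3 : (l.map qmk).Perm ((l₂.erase b).map qmk) := by
      rw [hbeq] at h2
      exact (by simpa using h2 : (qmk a :: l.map qmk).Perm (qmk a :: (l₂.erase b).map qmk)).cons_inv
    have IH' := IH _ h3
    have : SC (listPar (a :: l)) (listPar (b :: l₂.erase b)) := SC.par hab IH'
    exact this.trans (sc_listPar_perm hperm.symm)

theorem cm_par (P Q : Proc) : cm (.par P Q) = cm P + cm Q := by
  simp [cm, comps]

theorem cm_pre (a : Act) (P : Proc) : cm (.pre a P) = {qmk (.pre a P)} := by
  simp [cm, comps]

theorem cm_nil : cm .nil = 0 := rfl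

theorem sc_of_cm_eq {A B : Proc} (h : cm A = cm B) : SC A B := by
  have hp : ((comps A).map qmk).Perm ((comps B).map qmk) := Multiset.coe_eq_coe.mp h
  exact ((sc_comps A).trans (sc_of_map_perm _ _ hp)).trans (sc_comps B).symm

theorem sc_cm {A B : Proc} (h : SC A B) : cm A = cm B := by
  induction h with
  | refl => rfl
  | symm _ IH => exact IH.symm
  | trans _ _ IH1 IH2 => exact IH1.trans IH2
  | comm P Q => rw [cm_par, cm_par, add_comm]
  | assoc P Q R => rw [cm_par, cm_par, cm_par, cm_par, add_assoc]
  | unit P => rw [cm_par, cm_nil, add_zero]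
  | pre η h IH =>
    rw [cm_pre, cm_pre]
    congr 1
    exact qmk_eq_of_sc (SC.pre η h)
  | par _ _ IH1 IH2 => rw [cm_par, cm_par, IH1, IH2]

theorem comps_prefixed : ∀ {P c : Proc}, c ∈ comps P → ∃ a B, c = .pre a B := by
  intro P
  induction P with
  | nil => intro c h; simp [comps] at h
  | pre a P IH => intro c h; simp [comps] at h; exact ⟨a, P, h⟩
  | par P Q IH1 IH2 =>
    intro c h
    rcases List.mem_append.mp h with h | h
    · exact IH1 h
    · exact IH2 h

theorem size_comps : ∀ (P : Proc), P.size = ((comps P).map Proc.size).sum := by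
  intro P
  induction P with
  | nil => rfl
  | pre a P IH => simp [comps, Proc.size]
  | par P Q IH1 IH2 => simp [comps, Proc.size, IH1, IH2]

theorem comp_size_le {P c : Proc} (h : c ∈ comps P) : c.size ≤ P.size := by
  rw [size_comps P]
  exact List.single_le_sum (by simp) _ (List.mem_map_of_mem h)

theorem comp_size_pos {P c : Proc} (h : c ∈ comps P) : 0 < c.size := by
  obtain ⟨a, B, rfl⟩ := comps_prefixed h
  simp [Proc.size]

theorem size_zero_of_comps_nil {P : Proc} (h : comps P = []) : P.size = 0 := by
  rw [size_comps P, h]; rfl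

theorem cm_cons_erase {A p : Proc} (h : p ∈ comps A) :
    cm A = qmk p ::ₘ (((comps A).erase p).map qmk : List PQ) := by
  have hperm : (comps A).Perm (p :: (comps A).erase p) := List.perm_cons_erase h
  have := (hperm.map qmk)
  have : cm A = (((p :: (comps A).erase p).map qmk : List PQ) : Multiset PQ) :=
    Multiset.coe_eq_coe.mpr this
  simpa using this

theorem sc_fire {A p : Proc} (h : p ∈ comps A) :
    SC A (.par p (listPar ((comps A).erase p))) :=
  (sc_comps A).trans (sc_listPar_perm (List.perm_cons_erase h))

end Comps
section NFGood

def Good : Proc → Prop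
  | .nil => True
  | .pre η P => Good P ∧ ¬∃ C k, 1 ≤ k ∧ SC P (.par C (pow (.pre η C) k))
  | .par P Q => Good P ∧ Good Q

theorem sc_good {P Q : Proc} (h : SC P Q) : Good P ↔ Good Q := by
  induction h with
  | refl => exact Iff.rfl
  | symm _ IH => exact IH.symm
  | trans _ _ IH1 IH2 => exact IH1.trans IH2
  | comm P Q => simp [Good, and_comm]
  | assoc P Q R => simp [Good]; tauto
  | unit P => simp [Good]
  | pre η h IH =>
    simp only [Good]
    constructor
    · rintro ⟨h1, h2⟩
      exact ⟨IH.mp h1, fun ⟨C, k, hk, hsc⟩ => h2 ⟨C, k, hk, h.trans hsc⟩⟩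
    · rintro ⟨h1, h2⟩
      exact ⟨IH.mpr h1, fun ⟨C, k, hk, hsc⟩ => h2 ⟨C, k, hk, h.symm.trans hsc⟩⟩
  | par _ _ IH1 IH2 => simp only [Good]; rw [IH1, IH2]

theorem rw_not_good : ∀ {P P' : Proc}, RW P P' → ¬ Good P := by
  intro P P' h
  induction h with
  | head hk => rintro ⟨h1, h2⟩; exact h2 ⟨_, _, hk, .refl _⟩
  | pre η h IH => rintro ⟨h1, _⟩; exact IH h1
  | parL Q h IH => rintro ⟨h1, h2⟩; exact IH h1
  | parR P h IH => rintro ⟨h1, h2⟩; exact IH h2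
  | congr h1 h2 h3 IH => intro hg; exact IH ((sc_good h1).mp hg)

theorem not_good_rw : ∀ {P : Proc}, ¬ Good P → ∃ P', RW P P' := by
  intro P
  induction P with
  | nil => intro h; exact absurd trivial h
  | pre a P IH =>
    intro h
    by_cases hg : Good P
    · have : ∃ C k, 1 ≤ k ∧ SC P (.par C (pow (.pre a C) k)) := by
        by_contra hne
        exact h ⟨hg, hne⟩
      obtain ⟨C, k, hk, hsc⟩ := this
      exact ⟨_, .congr (SC.pre a hsc) (.head hk) (.refl _)⟩
    · obtain ⟨P', hP'⟩ := IH hg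
      exact ⟨_, .pre a hP'⟩
  | par P Q IH1 IH2 =>
    intro h
    by_cases hg : Good P
    · have : ¬ Good Q := fun hq => h ⟨hg, hq⟩
      obtain ⟨Q', hQ'⟩ := IH2 this
      exact ⟨_, .parR _ hQ'⟩
    · obtain ⟨P', hP'⟩ := IH1 hg
      exact ⟨_, .parL _ hP'⟩

theorem nf_iff_good {P : Proc} : NF P ↔ Good P := by
  constructor
  · intro h; by_contra hg; exact h (not_good_rw hg)
  · rintro hg ⟨P', hP'⟩; exact rw_not_good hP' hg

theorem nf_par_iff {P Q : Proc} : NF (.par P Q) ↔ NF P ∧ NF Q := by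
  simp only [nf_iff_good]; exact Iff.rfl

theorem nf_pre_body {a : Act} {P : Proc} (h : NF (.pre a P)) : NF P := by
  rw [nf_iff_good] at *; exact h.1

theorem nf_nil : NF .nil := nf_iff_good.mpr trivial

theorem sc_nf {P Q : Proc} (h : SC P Q) : NF P ↔ NF Q := by
  rw [nf_iff_good, nf_iff_good]; exact sc_good h

theorem nf_comps : ∀ {P : Proc}, NF P → ∀ c ∈ comps P, NF c := by
  intro P
  induction P with
  | nil => intro _ c h; simp [comps] at h
  | pre a P IH => intro hnf c h; simp [comps] at h; subst h; exact hnf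
  | par P Q IH1 IH2 =>
    intro hnf c h
    obtain ⟨h1, h2⟩ := nf_par_iff.mp hnf
    rcases List.mem_append.mp h with h | h
    · exact IH1 h1 c h
    · exact IH2 h2 c h

theorem nf_listPar : ∀ {l : List Proc}, (∀ c ∈ l, NF c) → NF (listPar l) := by
  intro l
  induction l with
  | nil => intro _; exact nf_nil
  | cons a l IH =>
    intro h
    exact nf_par_iff.mpr ⟨h a (by simp), IH (fun c hc => h c (by simp [hc]))⟩

end NFGood

section Meas

def meas : Proc → ℕ
  | .nil => 0
  | .pre _ P => 2 * meas P + 1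
  | .par P Q => meas P + meas Q

theorem sc_meas {P Q : Proc} (h : SC P Q) : meas P = meas Q := by
  induction h with
  | refl => rfl
  | symm _ IH => omega
  | trans _ _ IH1 IH2 => omega
  | comm P Q => simp [meas]; omega
  | assoc P Q R => simp [meas]; omega
  | unit P => simp [meas]
  | pre η h IH => simp [meas]; omega
  | par _ _ IH1 IH2 => simp [meas]; omega

theorem meas_pow (P : Proc) : ∀ k, meas (pow P k) = k * meas P := by
  intro k
  induction k with
  | zero => simp [pow, meas]
  | succ k IH => simp [pow, meas, IH]; ring

theorem rw_meas : ∀ {P P' : Proc}, RW P P' → meas P' < meas P := by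
  intro P P' h
  induction h with
  | head hk =>
    rename_i η P k
    simp only [meas, meas_pow]
    nlinarith [meas P, hk]
  | pre η h IH => simp [meas]; omega
  | parL Q h IH => simp [meas]; omega
  | parR P h IH => simp [meas]; omega
  | congr h1 h2 h3 IH => rw [sc_meas h1, ← sc_meas h3]; exact IH

theorem exists_nf : ∀ (n : ℕ) (P : Proc), meas P ≤ n → ∃ P₀, Rws P P₀ ∧ NF P₀ := by
  intro n
  induction n with
  | zero =>
    intro P hP
    by_cases h : NF P
    · exact ⟨P, .refl, h⟩
    · simp only [NF, not_not] at h
      obtain ⟨P', hP'⟩ := h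
      have := rw_meas hP'
      omega
  | succ n IH =>
    intro P hP
    by_cases h : NF P
    · exact ⟨P, .refl, h⟩
    · simp only [NF, not_not] at h
      obtain ⟨P', hP'⟩ := h
      have := rw_meas hP'
      obtain ⟨P₀, h1, h2⟩ := IH P' (by omega)
      exact ⟨P₀, .head hP' h1, h2⟩

end Meas

section RWBisim

theorem pow_step {η : Act} {P : Proc} : ∀ {j μ T}, Step (pow (.pre η P) j) μ T →
    ∃ j', j = j' + 1 ∧ μ = .act η ∧ SC T (.par P (pow (.pre η P) j')) := by
  intro j
  induction j with
  | zero => intro μ T h; exact absurd h (fun h => nil_no_step h)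
  | succ j IH =>
    intro μ T h
    cases h with
    | parL _ h =>
      obtain ⟨rfl, rfl⟩ := step_pre_inv h
      exact ⟨j, rfl, rfl, .refl _⟩
    | parR _ h =>
      obtain ⟨j', rfl, rfl, hsc⟩ := IH h
      refine ⟨j' + 1, rfl, rfl, ?_⟩
      exact (SC.par (SC.refl _) hsc).trans
        ((SC.assoc _ _ _).trans ((SC.par (SC.comm _ _) (SC.refl _)).trans (SC.assoc _ _ _).symm))
    | syn h1 h2 =>
      obtain ⟨he, rfl⟩ := step_pre_inv h1
      obtain ⟨j', hj, he2, _⟩ := IH h2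
      injection he with ha
      injection he2 with hb
      exact absurd (ha ▸ hb) (co_ne _)

theorem rw_head_bisim {η : Act} {P : Proc} {k : ℕ} (hk : 1 ≤ k) :
    Bisim (.pre η (.par P (pow (.pre η P) k))) (pow (.pre η P) (k+1)) := by
  refine ⟨fun U V => Bisim U V ∨
      (U = .pre η (.par P (pow (.pre η P) k)) ∧ V = pow (.pre η P) (k+1)) ∨
      (V = .pre η (.par P (pow (.pre η P) k)) ∧ U = pow (.pre η P) (k+1)),
    ⟨?_, ?_⟩, .inr (.inl ⟨rfl, rfl⟩)⟩
  · rintro U V (h | ⟨rfl, rfl⟩ | ⟨rfl, rfl⟩)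
    · exact .inl (bisim_symm h)
    · exact .inr (.inr ⟨rfl, rfl⟩)
    · exact .inr (.inl ⟨rfl, rfl⟩)
  · rintro U V μ U' (h | ⟨rfl, rfl⟩ | ⟨rfl, rfl⟩) hs
    · obtain ⟨V', h1, h2⟩ := bisim_step h hs
      exact ⟨V', h1, .inl h2⟩
    · obtain ⟨rfl, rfl⟩ := step_pre_inv hs
      exact ⟨.par P (pow (.pre η P) k), .parL _ (.pre η P), .inl (bisim_refl _)⟩
    · obtain ⟨j', hj, rfl, hsc⟩ := pow_step hs
      have hj' : j' = k := by omega
      rw [hj'] at hsc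
      exact ⟨.par P (pow (.pre η P) k), .pre η _, .inl (sc_bisim hsc)⟩

theorem rw_bisim {P P' : Proc} (h : RW P P') : Bisim P P' := by
  induction h with
  | head hk => exact rw_head_bisim hk
  | pre η h IH => exact bisim_pre_congr η IH
  | parL Q h IH => exact bisim_par_congr IH (bisim_refl Q)
  | parR P h IH => exact bisim_par_congr (bisim_refl P) IH
  | congr h1 h2 h3 IH => exact bisim_trans (bisim_trans (sc_bisim h1) IH) (sc_bisim h3)

theorem rws_bisim {P P' : Proc} (h : Rws P P') : Bisim P P' := by
  induction h with
  | refl => exact bisim_refl _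
  | tail h1 h2 IH => exact bisim_trans IH (rw_bisim h2)

end RWBisim
section Helpers

theorem sc_mid (X Y Z : Proc) : SC (.par X (.par Y Z)) (.par Y (.par X Z)) :=
  (SC.assoc _ _ _).trans ((SC.par (SC.comm _ _) (SC.refl _)).trans (SC.assoc _ _ _).symm)

theorem step_act_decomp : ∀ {X : Proc} {a : Act} {X' : Proc}, Step X (.act a) X' →
    ∃ D Y, SC X (.par (.pre a D) Y) ∧ SC X' (.par D Y) := by
  intro X a X' h
  generalize hμ : Lab.act a = μ at h
  induction h generalizing a with
  | pre η P =>
    cases hμ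
    exact ⟨P, .nil, (SC.unit _).symm, (SC.unit _).symm⟩
  | syn h1 h2 IH1 IH2 => exact absurd hμ (by simp)
  | parL Q h IH =>
    obtain ⟨D, Y, h1, h2⟩ := IH hμ
    exact ⟨D, .par Y Q, (SC.par h1 (SC.refl Q)).trans (SC.assoc _ _ _).symm,
      (SC.par h2 (SC.refl Q)).trans (SC.assoc _ _ _).symm⟩
  | parR P h IH =>
    obtain ⟨D, Y, h1, h2⟩ := IH hμ
    exact ⟨D, .par P Y, (SC.par (SC.refl P) h1).trans (sc_mid _ _ _),
      (SC.par (SC.refl P) h2).trans (sc_mid _ _ _)⟩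

theorem fire_match {A B : Proc} {a : Act} {C : Proc} (hb : Bisim A B)
    (hp : (Proc.pre a C) ∈ comps A) :
    ∃ D Y, Bisim (.par C (listPar ((comps A).erase (.pre a C)))) (.par D Y) ∧
      SC B (.par (.pre a D) Y) := by
  have hsc := sc_fire hp
  have hb2 : Bisim (.par (.pre a C) (listPar ((comps A).erase (.pre a C)))) B :=
    bisim_trans (sc_bisim hsc.symm) hb
  obtain ⟨T, hT, hbT⟩ := bisim_step hb2 (.parL _ (.pre a C))
  obtain ⟨D, Y, h1, h2⟩ := step_act_decomp hT
  exact ⟨D, Y, bisim_trans hbT (sc_bisim h2), h1⟩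

theorem cm_listPar_prefixed : ∀ {l : List Proc}, (∀ c ∈ l, ∃ x y, c = Proc.pre x y) →
    cm (listPar l) = (l.map qmk : List PQ) := by
  intro l
  induction l with
  | nil => intro _; rfl
  | cons c l IH =>
    intro h
    obtain ⟨x, y, hxy⟩ := h c (by simp)
    have : cm (listPar (c :: l)) = cm c + cm (listPar l) := cm_par _ _
    rw [this, IH (fun d hd => h d (by simp [hd])), hxy, cm_pre]
    simp [Multiset.singleton_add]

theorem mem_cm {P : Proc} {x : PQ} : x ∈ cm P ↔ ∃ c ∈ comps P, qmk c = x := by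
  simp [cm]

theorem cm_mem_size {C : Proc} {x : PQ} (h : x ∈ cm C) : qsize x ≤ C.size := by
  obtain ⟨c, hc, rfl⟩ := mem_cm.mp h
  simpa using comp_size_le hc

noncomputable instance : DecidableEq PQ := Classical.decEq _

theorem count_zero_of_small {κ : PQ} {s : Multiset PQ} (h : ∀ x ∈ s, qsize x < qsize κ) :
    s.count κ = 0 := by
  by_contra h0
  have hκ : κ ∈ s := by
    rw [← Multiset.count_pos]; omega
  exact absurd (h κ hκ) (lt_irrefl _)

theorem exists_max_size : ∀ (l : List Proc), l ≠ [] → ∃ p ∈ l, ∀ x ∈ l, x.size ≤ p.size := by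
  intro l
  induction l with
  | nil => intro h; exact absurd rfl h
  | cons a l IH =>
    intro _
    rcases eq_or_ne l [] with rfl | hne
    · exact ⟨a, by simp, by simp⟩
    · obtain ⟨p, hp, hmax⟩ := IH hne
      by_cases h : a.size ≤ p.size
      · refine ⟨p, by simp [hp], ?_⟩
        intro x hx
        rcases List.mem_cons.mp hx with rfl | hx
        · exact h
        · exact hmax x hx
      · refine ⟨a, by simp, ?_⟩
        intro x hx
        rcases List.mem_cons.mp hx with rfl | hx
        · exact le_rfl
        · exact le_trans (hmax x hx) (by omega)

theorem cm_pow (a : Act) (D : Proc) : ∀ k, cm (pow (.pre a D) k) =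
    Multiset.replicate k (qmk (.pre a D)) := by
  intro k
  induction k with
  | zero => rfl
  | succ k IH =>
    have : cm (pow (.pre a D) (k+1)) = cm (.pre a D) + cm (pow (.pre a D) k) := cm_par _ _
    rw [this, IH, cm_pre, Multiset.replicate_succ]
    simp [Multiset.singleton_add]

theorem size_listPar : ∀ (l : List Proc), (listPar l).size = (l.map Proc.size).sum := by
  intro l
  induction l with
  | nil => rfl
  | cons a l IH => simp [listPar, Proc.size, IH]

theorem cm_card (P : Proc) : Multiset.card (cm P) = (comps P).length := by
  simp [cm]

end Helpers
section Main

theorem main : ∀ n : ℕ,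
    (∀ A B : Proc, A.size ≤ n → NF A → NF B → Bisim A B → SC A B) ∧
    (∀ (η : Act) (A : Proc), (Proc.pre η A).size ≤ n → NF (.pre η A) →
      ∀ Q R : Proc, NF Q → NF R → Bisim (.pre η A) (.par Q R) →
        Bisim Q .nil ∨ Bisim R .nil) := by
  intro n
  induction n using Nat.strong_induction_on with
  | _ n IH =>
  have hS1' : ∀ A B : Proc, A.size < n → NF A → NF B → Bisim A B → SC A B :=
    fun A B h => (IH A.size h).1 A B le_rfl
  have hS2 : ∀ (η : Act) (A : Proc), (Proc.pre η A).size ≤ n → NF (.pre η A) →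
      ∀ Q R : Proc, NF Q → NF R → Bisim (.pre η A) (.par Q R) →
        Bisim Q .nil ∨ Bisim R .nil := by
    intro η A hsize hnf Q R hnfQ hnfR hb
    by_cases hQ : Bisim Q .nil
    · exact .inl hQ
    by_cases hR : Bisim R .nil
    · exact .inr hR
    exfalso
    have hQs : Q.size ≠ 0 := fun h => hQ (bisim_nil_of_size h)
    have hRs : R.size ≠ 0 := fun h => hR (bisim_nil_of_size h)
    have hnfB : NF (Proc.par Q R) := nf_par_iff.mpr ⟨hnfQ, hnfR⟩
    have hcompsQ : comps Q ≠ [] := fun h => hQs (size_zero_of_comps_nil h)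
    have hcompsR : comps R ≠ [] := fun h => hRs (size_zero_of_comps_nil h)
    have hcompsB : comps (Proc.par Q R) = comps Q ++ comps R := rfl
    have hlen : 2 ≤ (comps (Proc.par Q R)).length := by
      rw [hcompsB, List.length_append]
      have h1 := List.length_pos_iff.mpr hcompsQ
      have h2 := List.length_pos_iff.mpr hcompsR
      omega
    have hsizeB : (Proc.par Q R).size = (Proc.pre η A).size := (bisim_size hb).symm
    have hNpos : 1 ≤ (Proc.pre η A).size := by simp [Proc.size]
    -- every component fires with action η and gives a firing equation
    have hfeq : ∀ p ∈ comps (Proc.par Q R), ∃ C, p = .pre η C ∧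
        cm A = cm C + ((((comps (Proc.par Q R)).erase p).map qmk : List PQ) : Multiset PQ) := by
      intro p hp
      obtain ⟨a, C, rfl⟩ := comps_prefixed hp
      have hsc := sc_fire hp
      have hb2 : Bisim (.par (.pre a C) (listPar ((comps (Proc.par Q R)).erase (.pre a C))))
          (.pre η A) := bisim_trans (sc_bisim hsc.symm) (bisim_symm hb)
      obtain ⟨T, hT, hbT⟩ := bisim_step hb2 (.parL _ (.pre a C))
      obtain ⟨ha, hTA⟩ := step_pre_inv hT
      injection ha with ha
      subst ha
      rw [hTA] at hbT
      refine ⟨C, rfl, ?_⟩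
      -- sizes
      have hsz : (Proc.par (Proc.pre a C)
          (listPar ((comps (Proc.par Q R)).erase (.pre a C)))).size = (Proc.par Q R).size :=
        (sc_size hsc).symm
      have hsz2 : (Proc.par C (listPar ((comps (Proc.par Q R)).erase (.pre a C)))).size < n := by
        have h1 := hsizeB
        have h2 := hsize
        simp only [Proc.size] at hsz h1 h2 ⊢
        omega
      have hnfC : NF C := nf_pre_body (nf_comps hnfB _ hp)
      have hnfrest : NF (listPar ((comps (Proc.par Q R)).erase (.pre a C))) :=
        nf_listPar (fun c hc => nf_comps hnfB c (List.mem_of_mem_erase hc))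
      have hnfA' : NF A := nf_pre_body hnf
      have hsc2 : SC (.par C (listPar ((comps (Proc.par Q R)).erase (.pre a C)))) A :=
        hS1' _ _ hsz2 (nf_par_iff.mpr ⟨hnfC, hnfrest⟩) hnfA' hbT
      have := sc_cm hsc2
      rw [cm_par] at this
      rw [← this]
      congr 1
      exact cm_listPar_prefixed (fun c hc => comps_prefixed (List.mem_of_mem_erase hc))
    -- maximal component
    have hcompsBne : comps (Proc.par Q R) ≠ [] := by
      intro h; rw [h] at hlen; simp at hlen
    obtain ⟨p₁, hp₁, hmax⟩ := exists_max_size _ hcompsBne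
    obtain ⟨C₁, hp₁e, heq₁⟩ := hfeq p₁ hp₁
    subst hp₁e
    -- all components are SC-equal to p₁
    have hall : ∀ p ∈ comps (Proc.par Q R), qmk p = qmk (Proc.pre η C₁) := by
      intro p hp
      by_contra hne
      obtain ⟨C, hpe, heq⟩ := hfeq p hp
      subst hpe
      have hc0 : (cm C).count (qmk (Proc.pre η C₁)) = 0 := by
        refine count_zero_of_small (fun x hx => ?_)
        have h1 := cm_mem_size hx
        have h2 := hmax _ hp
        simp only [Proc.size] at h2
        simp only [qsize_mk, Proc.size]
        omega
      have hc0' : (cm C₁).count (qmk (Proc.pre η C₁)) = 0 := by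
        refine count_zero_of_small (fun x hx => ?_)
        have h1 := cm_mem_size hx
        simp only [qsize_mk, Proc.size]
        omega
      have hce : cm (Proc.par Q R) = qmk (Proc.pre η C) ::ₘ
          ((((comps (Proc.par Q R)).erase (.pre η C)).map qmk : List PQ) : Multiset PQ) :=
        cm_cons_erase hp
      have hce₁ : cm (Proc.par Q R) = qmk (Proc.pre η C₁) ::ₘ
          ((((comps (Proc.par Q R)).erase (.pre η C₁)).map qmk : List PQ) : Multiset PQ) :=
        cm_cons_erase hp₁
      have e1 : (cm A).count (qmk (Proc.pre η C₁)) =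
          ((((comps (Proc.par Q R)).erase (.pre η C)).map qmk : List PQ) : Multiset PQ).count
            (qmk (Proc.pre η C₁)) := by
        rw [heq, Multiset.count_add, hc0]; omega
      have e2 : (cm A).count (qmk (Proc.pre η C₁)) =
          ((((comps (Proc.par Q R)).erase (.pre η C₁)).map qmk : List PQ) : Multiset PQ).count
            (qmk (Proc.pre η C₁)) := by
        rw [heq₁, Multiset.count_add, hc0']; omega
      have e3 := congrArg (Multiset.count (qmk (Proc.pre η C₁))) hce
      have e4 := congrArg (Multiset.count (qmk (Proc.pre η C₁))) hce₁
      rw [Multiset.count_cons] at e3 e4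
      simp only [if_pos rfl] at e4
      have hne' : ¬ (qmk (Proc.pre η C₁) = qmk (Proc.pre η C)) := fun h => hne h.symm
      rw [if_neg hne'] at e3
      rw [e1] at e2
      rw [e2] at e3
      rw [Nat.add_zero] at e3
      rw [e3] at e4
      exact absurd e4 (Nat.lt_succ_self _).ne
    -- cm B is a replicate
    have hrep : cm (Proc.par Q R) =
        Multiset.replicate (comps (Proc.par Q R)).length (qmk (Proc.pre η C₁)) := by
      refine Multiset.eq_replicate.mpr ⟨cm_card _, ?_⟩
      intro b hb'
      obtain ⟨c, hc, rfl⟩ := mem_cm.mp hb'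
      exact hall c hc
    have herase : ((((comps (Proc.par Q R)).erase (.pre η C₁)).map qmk : List PQ) : Multiset PQ) =
        Multiset.replicate ((comps (Proc.par Q R)).length - 1) (qmk (Proc.pre η C₁)) := by
      refine Multiset.eq_replicate.mpr ⟨?_, ?_⟩
      · simp [List.length_erase_of_mem hp₁]
      · intro b hb'
        simp only [Multiset.mem_coe, List.mem_map] at hb'
        obtain ⟨c, hc, rfl⟩ := hb'
        exact hall c (List.mem_of_mem_erase hc)
    -- the redex
    have hcmW : cm (Proc.par C₁ (pow (.pre η C₁) ((comps (Proc.par Q R)).length - 1))) =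
        cm C₁ + Multiset.replicate ((comps (Proc.par Q R)).length - 1) (qmk (Proc.pre η C₁)) := by
      rw [cm_par, cm_pow]
    have hscAW : SC A (Proc.par C₁ (pow (.pre η C₁) ((comps (Proc.par Q R)).length - 1))) :=
      sc_of_cm_eq (by rw [heq₁, herase, hcmW])
    have hk : 1 ≤ (comps (Proc.par Q R)).length - 1 := by omega
    have hrw : RW (.pre η A) (pow (.pre η C₁) ((comps (Proc.par Q R)).length - 1 + 1)) :=
      .congr (SC.pre η hscAW) (.head hk) (.refl _)
    exact hnf ⟨_, hrw⟩

  -- CORE: the multi-component case, fired at a maximal component of A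
  have CORE : ∀ A B a C, NF A → NF B → Bisim A B → A.size = n →
      2 ≤ (comps A).length → 2 ≤ (comps B).length →
      (Proc.pre a C) ∈ comps A →
      (∀ x ∈ comps A ++ comps B, x.size ≤ (Proc.pre a C).size) → cm A = cm B := by
    intro A B a C hnfA hnfB hb hsA hlenA hlenB hp hmax
    have hmaxA : ∀ x ∈ comps A, x.size ≤ (Proc.pre a C).size :=
      fun x hx => hmax x (List.mem_append_left _ hx)
    have hmaxB : ∀ x ∈ comps B, x.size ≤ (Proc.pre a C).size :=
      fun x hx => hmax x (List.mem_append_right _ hx)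
    have hsB : B.size = n := by rw [← bisim_size hb]; exact hsA
    have hn1 : 1 ≤ n := by
      have h1 := comp_size_le hp
      have h2 := comp_size_pos hp
      omega
    obtain ⟨D, Y, hbCD, hscB⟩ := fire_match hb hp
    have hnfC : NF C := nf_pre_body (nf_comps hnfA _ hp)
    have hnfrest : NF (listPar ((comps A).erase (Proc.pre a C))) :=
      nf_listPar (fun c hc => nf_comps hnfA c (List.mem_of_mem_erase hc))
    have hnfDY : NF (Proc.par (Proc.pre a D) Y) := (sc_nf hscB).mp hnfB
    have hnfD : NF D := nf_pre_body (nf_par_iff.mp hnfDY).1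
    have hnfY : NF Y := (nf_par_iff.mp hnfDY).2
    have hszfire : (Proc.par (Proc.pre a C) (listPar ((comps A).erase (Proc.pre a C)))).size
        = n := by rw [← sc_size (sc_fire hp)]; exact hsA
    have hszCrest : (Proc.par C (listPar ((comps A).erase (Proc.pre a C)))).size < n := by
      simp only [Proc.size] at hszfire ⊢
      omega
    have hscCDY : SC (Proc.par C (listPar ((comps A).erase (Proc.pre a C)))) (Proc.par D Y) :=
      hS1' _ _ hszCrest (nf_par_iff.mpr ⟨hnfC, hnfrest⟩) (nf_par_iff.mpr ⟨hnfD, hnfY⟩) hbCD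
    have hcm1 : cm C + ((((comps A).erase (Proc.pre a C)).map qmk : List PQ) : Multiset PQ)
        = cm D + cm Y := by
      have h2 := sc_cm hscCDY
      rw [cm_par, cm_par] at h2
      rwa [cm_listPar_prefixed (fun c hc => comps_prefixed (List.mem_of_mem_erase hc))] at h2
    have hcmA : cm A = qmk (Proc.pre a C) ::ₘ
        ((((comps A).erase (Proc.pre a C)).map qmk : List PQ) : Multiset PQ) := cm_cons_erase hp
    have hcmB : cm B = qmk (Proc.pre a D) ::ₘ cm Y := by
      rw [sc_cm hscB, cm_par, cm_pre, Multiset.singleton_add]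
    by_cases hCD : Bisim C D
    · -- good case: matching component
      have hsizeC : C.size < n := by
        have h1 := comp_size_le hp
        simp only [Proc.size] at h1
        omega
      have hscCD : SC C D := hS1' _ _ hsizeC hnfC hnfD hCD
      have hEY : ((((comps A).erase (Proc.pre a C)).map qmk : List PQ) : Multiset PQ) = cm Y := by
        have h2 := hcm1
        rw [sc_cm hscCD] at h2
        exact add_left_cancel h2
      rw [hcmA, hcmB, hEY, qmk_eq_of_sc (SC.pre a hscCD)]
    · -- bad case
      have hqD : qmk (Proc.pre a D) ≠ qmk (Proc.pre a C) := by
        intro h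
        exact hCD (bisim_symm (bisim_pre_inv (sc_bisim (sc_of_qmk_eq h))).2)
      have hDmem : qmk (Proc.pre a D) ∈ cm B := by
        rw [hcmB]; exact Multiset.mem_cons_self _ _
      obtain ⟨bD, hbDmem, hbDeq⟩ := mem_cm.mp hDmem
      have hsizeD : (Proc.pre a D).size ≤ (Proc.pre a C).size := by
        have h1 := hmaxB bD hbDmem
        have h2 : (Proc.pre a D).size = bD.size := sc_size (sc_of_qmk_eq hbDeq.symm)
        omega
      have hc0C : (cm C).count (qmk (Proc.pre a C)) = 0 := by
        refine count_zero_of_small (fun x hx => ?_)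
        have h1 := cm_mem_size hx
        simp only [qsize_mk, Proc.size]
        omega
      have hc0D : (cm D).count (qmk (Proc.pre a C)) = 0 := by
        refine count_zero_of_small (fun x hx => ?_)
        have h1 := cm_mem_size hx
        simp only [Proc.size] at hsizeD
        simp only [qsize_mk, Proc.size]
        omega
      have he : ((((comps A).erase (Proc.pre a C)).map qmk : List PQ) : Multiset PQ).count
          (qmk (Proc.pre a C)) = (cm Y).count (qmk (Proc.pre a C)) := by
        have g1 := congrArg (Multiset.count (qmk (Proc.pre a C))) hcm1
        rw [Multiset.count_add, Multiset.count_add, hc0C, hc0D, Nat.zero_add, Nat.zero_add] at g1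
        exact g1
      have hcntA : (cm A).count (qmk (Proc.pre a C)) =
          ((((comps A).erase (Proc.pre a C)).map qmk : List PQ) : Multiset PQ).count
            (qmk (Proc.pre a C)) + 1 := by
        have g2 := congrArg (Multiset.count (qmk (Proc.pre a C))) hcmA
        rw [Multiset.count_cons, if_pos rfl] at g2
        exact g2
      have hcntB : (cm B).count (qmk (Proc.pre a C)) = (cm Y).count (qmk (Proc.pre a C)) := by
        have g3 := congrArg (Multiset.count (qmk (Proc.pre a C))) hcmB
        rw [Multiset.count_cons, if_neg (fun h => hqD h.symm), Nat.add_zero] at g3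
        exact g3
      have hABcnt : (cm A).count (qmk (Proc.pre a C)) =
          (cm B).count (qmk (Proc.pre a C)) + 1 := by
        rw [hcntA, he, ← hcntB]
      by_cases hallκ : ∀ x ∈ comps A, qmk x = qmk (Proc.pre a C)
      · -- A is a power of the maximal component
        have hrepA : cm A = Multiset.replicate (comps A).length (qmk (Proc.pre a C)) := by
          refine Multiset.eq_replicate.mpr ⟨cm_card _, ?_⟩
          intro x hx
          obtain ⟨c, hc, rfl⟩ := mem_cm.mp hx
          exact hallκ c hc
        have hcntA' : (cm A).count (qmk (Proc.pre a C)) = (comps A).length := by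
          rw [hrepA, Multiset.count_replicate, if_pos rfl]
        have hbpos : 0 < (cm B).count (qmk (Proc.pre a C)) := by
          have h6 := hcntA'.symm.trans hABcnt
          omega
        have hκB : qmk (Proc.pre a C) ∈ cm B := Multiset.count_pos.mp hbpos
        obtain ⟨b, hbB, hbκ⟩ := mem_cm.mp hκB
        have hscb : SC b (Proc.pre a C) := sc_of_qmk_eq hbκ
        have hsc2 : SC B (.par (Proc.pre a C) (listPar ((comps B).erase b))) :=
          (sc_fire hbB).trans (SC.par hscb (SC.refl _))
        have hb3 : Bisim (.par (Proc.pre a C) (listPar ((comps B).erase b))) A :=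
          bisim_trans (sc_bisim hsc2.symm) (bisim_symm hb)
        obtain ⟨T, hT, hbT⟩ := bisim_step hb3 (.parL _ (.pre a C))
        obtain ⟨D₀, Y₀, hd1, hd2⟩ := step_act_decomp hT
        have hbT2 : Bisim (.par C (listPar ((comps B).erase b))) (.par D₀ Y₀) :=
          bisim_trans hbT (sc_bisim hd2)
        have hcmA₀ : cm A = qmk (Proc.pre a D₀) ::ₘ cm Y₀ := by
          rw [sc_cm hd1, cm_par, cm_pre, Multiset.singleton_add]
        have hD₀κ : qmk (Proc.pre a D₀) = qmk (Proc.pre a C) := by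
          have hmem : qmk (Proc.pre a D₀) ∈ cm A := by
            rw [hcmA₀]; exact Multiset.mem_cons_self _ _
          obtain ⟨c, hc, hceq⟩ := mem_cm.mp hmem
          rw [← hceq]; exact hallκ c hc
        have hbD₀C : Bisim D₀ C := (bisim_pre_inv (sc_bisim (sc_of_qmk_eq hD₀κ))).2
        have hnfrB : NF (listPar ((comps B).erase b)) :=
          nf_listPar (fun c hc => nf_comps hnfB c (List.mem_of_mem_erase hc))
        have hnfADY : NF (.par (.pre a D₀) Y₀) := (sc_nf hd1).mp hnfA
        have hnfD₀ : NF D₀ := nf_pre_body (nf_par_iff.mp hnfADY).1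
        have hnfY₀ : NF Y₀ := (nf_par_iff.mp hnfADY).2
        have hsz3 : (Proc.par (Proc.pre a C) (listPar ((comps B).erase b))).size = n := by
          rw [← sc_size hsc2]; exact hsB
        have hsz4 : (Proc.par C (listPar ((comps B).erase b))).size < n := by
          simp only [Proc.size] at hsz3 ⊢
          omega
        have hsc5 : SC (.par C (listPar ((comps B).erase b))) (.par D₀ Y₀) :=
          hS1' _ _ hsz4 (nf_par_iff.mpr ⟨hnfC, hnfrB⟩) (nf_par_iff.mpr ⟨hnfD₀, hnfY₀⟩) hbT2
        have hsizeD₀ : D₀.size < n := by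
          have h1 := bisim_size hbD₀C
          have h2 := comp_size_le hp
          simp only [Proc.size] at h2
          omega
        have hscD₀C : SC D₀ C := hS1' _ _ hsizeD₀ hnfD₀ hnfC hbD₀C
        have h6 : cm C + ((((comps B).erase b).map qmk : List PQ) : Multiset PQ)
            = cm D₀ + cm Y₀ := by
          have h7 := sc_cm hsc5
          rw [cm_par, cm_par] at h7
          rwa [cm_listPar_prefixed (fun c hc => comps_prefixed (List.mem_of_mem_erase hc))] at h7
        rw [sc_cm hscD₀C] at h6
        have h7 : ((((comps B).erase b).map qmk : List PQ) : Multiset PQ) = cm Y₀ :=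
          add_left_cancel h6
        rw [hcmA₀, hD₀κ, ← h7, cm_cons_erase hbB, hbκ]
      · -- a non-maximal component of A exists : contradiction
        exfalso
        push_neg at hallκ
        obtain ⟨p', hp', hp'ne⟩ := hallκ
        obtain ⟨a', C', rfl⟩ := comps_prefixed hp'
        obtain ⟨D', Y', hb', hscB'⟩ := fire_match hb hp'
        have hnfC' : NF C' := nf_pre_body (nf_comps hnfA _ hp')
        have hnfrest' : NF (listPar ((comps A).erase (Proc.pre a' C'))) :=
          nf_listPar (fun c hc => nf_comps hnfA c (List.mem_of_mem_erase hc))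
        have hnfDY' : NF (Proc.par (Proc.pre a' D') Y') := (sc_nf hscB').mp hnfB
        have hnfD' : NF D' := nf_pre_body (nf_par_iff.mp hnfDY').1
        have hnfY' : NF Y' := (nf_par_iff.mp hnfDY').2
        have hszfire' : (Proc.par (Proc.pre a' C')
            (listPar ((comps A).erase (Proc.pre a' C')))).size = n := by
          rw [← sc_size (sc_fire hp')]; exact hsA
        have hszCrest' : (Proc.par C' (listPar ((comps A).erase (Proc.pre a' C')))).size
            < n := by
          simp only [Proc.size] at hszfire' ⊢
          omega
        have hscCDY' : SC (Proc.par C' (listPar ((comps A).erase (Proc.pre a' C'))))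
            (Proc.par D' Y') :=
          hS1' _ _ hszCrest' (nf_par_iff.mpr ⟨hnfC', hnfrest'⟩)
            (nf_par_iff.mpr ⟨hnfD', hnfY'⟩) hb'
        have h8 : cm C' + ((((comps A).erase (Proc.pre a' C')).map qmk : List PQ) : Multiset PQ)
            = cm D' + cm Y' := by
          have h9 := sc_cm hscCDY'
          rw [cm_par, cm_par] at h9
          rwa [cm_listPar_prefixed (fun c hc => comps_prefixed (List.mem_of_mem_erase hc))] at h9
        have hc0C' : (cm C').count (qmk (Proc.pre a C)) = 0 := by
          refine count_zero_of_small (fun x hx => ?_)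
          have h1 := cm_mem_size hx
          have h2 := hmaxA _ hp'
          simp only [Proc.size] at h2
          simp only [qsize_mk, Proc.size]
          omega
        have hD'mem : qmk (Proc.pre a' D') ∈ cm B := by
          rw [sc_cm hscB', cm_par, cm_pre, Multiset.singleton_add]
          exact Multiset.mem_cons_self _ _
        obtain ⟨bD', hbD'mem, hbD'eq⟩ := mem_cm.mp hD'mem
        have hsizeD' : (Proc.pre a' D').size ≤ (Proc.pre a C).size := by
          have h1 := hmaxB bD' hbD'mem
          have h2 : (Proc.pre a' D').size = bD'.size := sc_size (sc_of_qmk_eq hbD'eq.symm)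
          omega
        have hc0D' : (cm D').count (qmk (Proc.pre a C)) = 0 := by
          refine count_zero_of_small (fun x hx => ?_)
          have h1 := cm_mem_size hx
          simp only [Proc.size] at hsizeD'
          simp only [qsize_mk, Proc.size]
          omega
        have g1 : ((((comps A).erase (Proc.pre a' C')).map qmk : List PQ) : Multiset PQ).count
            (qmk (Proc.pre a C)) = (cm Y').count (qmk (Proc.pre a C)) := by
          have g0 := congrArg (Multiset.count (qmk (Proc.pre a C))) h8
          rw [Multiset.count_add, Multiset.count_add, hc0C', hc0D',
            Nat.zero_add, Nat.zero_add] at g0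
          exact g0
        have g2 : (cm A).count (qmk (Proc.pre a C)) =
            ((((comps A).erase (Proc.pre a' C')).map qmk : List PQ) : Multiset PQ).count
              (qmk (Proc.pre a C)) := by
          have g0 := congrArg (Multiset.count (qmk (Proc.pre a C))) (cm_cons_erase hp')
          rw [Multiset.count_cons, if_neg (fun h => hp'ne h.symm), Nat.add_zero] at g0
          exact g0
        have g3 : (cm Y').count (qmk (Proc.pre a C)) ≤ (cm B).count (qmk (Proc.pre a C)) := by
          have g0 := congrArg (Multiset.count (qmk (Proc.pre a C)))
            (sc_cm hscB')
          rw [cm_par, cm_pre, Multiset.singleton_add, Multiset.count_cons] at g0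
          rw [g0]
          exact Nat.le_add_right _ _
        have k1 : (cm B).count (qmk (Proc.pre a C)) + 1 ≤
            (cm B).count (qmk (Proc.pre a C)) := by
          calc (cm B).count (qmk (Proc.pre a C)) + 1
              = (cm A).count (qmk (Proc.pre a C)) := hABcnt.symm
            _ = (cm Y').count (qmk (Proc.pre a C)) := g2.trans g1
            _ ≤ (cm B).count (qmk (Proc.pre a C)) := g3
        exact Nat.not_succ_le_self _ k1
  have hS1 : ∀ A B : Proc, A.size ≤ n → NF A → NF B → Bisim A B → SC A B := by
    intro A B hsize hnfA hnfB hb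
    rcases lt_or_eq_of_le hsize with hlt | heqn
    · exact hS1' A B hlt hnfA hnfB hb
    have hsB : B.size = n := by rw [← bisim_size hb]; exact heqn
    rcases hcA : comps A with _ | ⟨p, lA⟩
    · have h0 : A.size = 0 := size_zero_of_comps_nil hcA
      have h0B : B.size = 0 := by
        have := bisim_size hb
        omega
      exact (size_zero_sc_nil h0).trans (size_zero_sc_nil h0B).symm
    rcases hcB : comps B with _ | ⟨q, lB⟩
    · have h0 : B.size = 0 := size_zero_of_comps_nil hcB
      have h0A : A.size = 0 := by
        have := bisim_size hb
        omega
      exact (size_zero_sc_nil h0A).trans (size_zero_sc_nil h0).symm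
    have hpA : p ∈ comps A := by rw [hcA]; exact List.mem_cons_self
    have hqB : q ∈ comps B := by rw [hcB]; exact List.mem_cons_self
    rcases hlA : lA with _ | ⟨p2, lA'⟩
    · -- A has a single component
      subst hlA
      have hscA : SC A (Proc.par p Proc.nil) := by
        have h1 := sc_comps A
        rw [hcA] at h1
        exact h1
      have hscA' : SC A p := hscA.trans (SC.unit p)
      obtain ⟨a, C, rfl⟩ := comps_prefixed hpA
      have hnfp : NF (Proc.pre a C) := (sc_nf hscA').mp hnfA
      have hsp : (Proc.pre a C).size = n := by rw [← sc_size hscA']; exact heqn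
      rcases hlB : lB with _ | ⟨q2, lB'⟩
      · -- B single too
        subst hlB
        have hscB : SC B (Proc.par q Proc.nil) := by
          have h1 := sc_comps B
          rw [hcB] at h1
          exact h1
        have hscB' : SC B q := hscB.trans (SC.unit q)
        obtain ⟨bq, Dq, rfl⟩ := comps_prefixed hqB
        have hbpq : Bisim (Proc.pre a C) (Proc.pre bq Dq) :=
          bisim_trans (sc_bisim hscA'.symm) (bisim_trans hb (sc_bisim hscB'))
        obtain ⟨hab, hbCD⟩ := bisim_pre_inv hbpq
        subst hab
        have hnfq : NF (Proc.pre a Dq) := (sc_nf hscB').mp hnfB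
        have hsizeC : C.size < n := by
          simp only [Proc.size] at hsp
          omega
        have hscCD : SC C Dq :=
          hS1' _ _ hsizeC (nf_pre_body hnfp) (nf_pre_body hnfq) hbCD
        exact hscA'.trans ((SC.pre a hscCD).trans hscB'.symm)
      · -- A single, B has ≥ 2 components: contradicts primality
        exfalso
        have hscBq : SC B (.par q (listPar ((comps B).erase q))) := sc_fire hqB
        have hbig : Bisim (Proc.pre a C) (.par q (listPar ((comps B).erase q))) :=
          bisim_trans (sc_bisim hscA'.symm) (bisim_trans hb (sc_bisim hscBq))
        have hnfq : NF q := nf_comps hnfB _ hqB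
        have hnfrB : NF (listPar ((comps B).erase q)) :=
          nf_listPar (fun c hc => nf_comps hnfB c (List.mem_of_mem_erase hc))
        rcases hS2 a C (le_of_eq hsp) hnfp q _ hnfq hnfrB hbig with h | h
        · have h1 := size_of_bisim_nil h
          have h2 := comp_size_pos hqB
          omega
        · have h1 := size_of_bisim_nil h
          have h2 : 0 < (listPar ((comps B).erase q)).size := by
            rw [hcB, hlB, List.erase_cons_head, size_listPar, List.map_cons, List.sum_cons]
            have h3 : (0:ℕ) < q2.size := comp_size_pos (P := B) (by rw [hcB, hlB]; simp)
            omega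
          omega
    · -- A has ≥ 2 components
      rcases hlB : lB with _ | ⟨q2, lB'⟩
      · -- B single, A multi: symmetric primality contradiction
        exfalso
        subst hlB
        have hscB : SC B (Proc.par q Proc.nil) := by
          have h1 := sc_comps B
          rw [hcB] at h1
          exact h1
        have hscB' : SC B q := hscB.trans (SC.unit q)
        obtain ⟨bq, Dq, rfl⟩ := comps_prefixed hqB
        have hnfq : NF (Proc.pre bq Dq) := (sc_nf hscB').mp hnfB
        have hsq : (Proc.pre bq Dq).size = n := by rw [← sc_size hscB']; exact hsB
        have hscAp : SC A (.par p (listPar ((comps A).erase p))) := sc_fire hpA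
        have hbig : Bisim (Proc.pre bq Dq) (.par p (listPar ((comps A).erase p))) :=
          bisim_trans (sc_bisim hscB'.symm) (bisim_trans (bisim_symm hb) (sc_bisim hscAp))
        have hnfp : NF p := nf_comps hnfA _ hpA
        have hnfrA : NF (listPar ((comps A).erase p)) :=
          nf_listPar (fun c hc => nf_comps hnfA c (List.mem_of_mem_erase hc))
        rcases hS2 bq Dq (le_of_eq hsq) hnfq p _ hnfp hnfrA hbig with h | h
        · have h1 := size_of_bisim_nil h
          have h2 := comp_size_pos hpA
          omega
        · have h1 := size_of_bisim_nil h
          have h2 : 0 < (listPar ((comps A).erase p)).size := by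
            rw [hcA, hlA, List.erase_cons_head, size_listPar, List.map_cons, List.sum_cons]
            have h3 : (0:ℕ) < p2.size := comp_size_pos (P := A) (by rw [hcA, hlA]; simp)
            omega
          omega
      · -- both have ≥ 2 components
        have hlenA : 2 ≤ (comps A).length := by rw [hcA, hlA]; simp
        have hlenB : 2 ≤ (comps B).length := by rw [hcB, hlB]; simp
        have hne : comps A ++ comps B ≠ [] := by
          rw [hcA]; simp
        obtain ⟨pm, hpm, hmax⟩ := exists_max_size _ hne
        rcases List.mem_append.mp hpm with hmA | hmB
        · obtain ⟨am, Cm, rfl⟩ := comps_prefixed hmA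
          exact sc_of_cm_eq (CORE A B am Cm hnfA hnfB hb heqn hlenA hlenB hmA hmax)
        · obtain ⟨am, Cm, rfl⟩ := comps_prefixed hmB
          have hmax' : ∀ x ∈ comps B ++ comps A, x.size ≤ (Proc.pre am Cm).size := by
            intro x hx
            rcases List.mem_append.mp hx with h | h
            · exact hmax x (List.mem_append_right _ h)
            · exact hmax x (List.mem_append_left _ h)
          exact (sc_of_cm_eq
            (CORE B A am Cm hnfB hnfA (bisim_symm hb) hsB hlenB hlenA hmB hmax')).symm
  exact ⟨hS1, hS2⟩

end Main

/-- bisimilar normal forms are structurally congruent, and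
    every prefixed normal form is prime. -/
theorem nf_bisim_iff_sc :
    (∀ A B : Proc, NF A → NF B → Bisim A B → SC A B) ∧
    (∀ (η : Act) (A : Proc), NF (.pre η A) → IsPrime (.pre η A)) := by
  constructor
  · intro A B hA hB hb
    exact (main A.size).1 A B le_rfl hA hB hb
  · intro η A hnf
    constructor
    · intro hb
      obtain ⟨T, hT, _⟩ := bisim_step hb (.pre η A)
      exact nil_no_step hT
    · intro Q R hb
      obtain ⟨Q₀, hQ1, hQ2⟩ := exists_nf (meas Q) Q le_rfl
      obtain ⟨R₀, hR1, hR2⟩ := exists_nf (meas R) R le_rfl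
      have hb2 : Bisim (.pre η A) (.par Q₀ R₀) :=
        bisim_trans hb (bisim_par_congr (rws_bisim hQ1) (rws_bisim hR1))
      rcases (main (Proc.pre η A).size).2 η A le_rfl hnf Q₀ R₀ hQ2 hR2 hb2 with h | h
      · exact .inl (bisim_trans (rws_bisim hQ1) h)
      · exact .inr (bisim_trans (rws_bisim hR1) h)
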